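/- Weak duality for the PT model: if (π, Q, P) is PT-dual-feasible and (v, u) is PT-primal-feasible with goal price τ, then τ·(∑_{i∈I} Q i + ∑_{r∈R} P r) ≤ ∑_{i∈I} v i · X i o − ∑_{r∈R} u r · Y r o. -/
import Mathlib


open Finset

/-- A triple `(π, Q, P)` is PT-dual-feasible. -/
def PTDualFeasible {I R J : Type*} [Fintype I] [Fintype R] [Fintype J]
    (X : I → J → ℝ) (Y : R → J → ℝ) (o : J)
    (π : J → ℝ) (Q : I → ℝ) (P : R → ℝ) : Prop :=
  (∀ j, 0 ≤ π j) ∧ (∀ i, 0 ≤ Q i) ∧ (∀ r, 0 ≤ P r) ∧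
  (∀ i, (∑ j, X i j * π j) + Q i * X i o = X i o) ∧
  (∀ r, -(∑ j, Y r j * π j) + P r * Y r o = -(Y r o))

/-- A pair `(v, u)` is PT-primal-feasible with goal price `τ`. -/
def PTPrimalFeasible {I R J : Type*} [Fintype I] [Fintype R] [Fintype J]
    (X : I → J → ℝ) (Y : R → J → ℝ) (o : J) (τ : ℝ)
    (v : I → ℝ) (u : R → ℝ) : Prop :=
  (∀ j, 0 ≤ (∑ i, v i * X i j) - ∑ r, u r * Y r j) ∧
  (∀ i, τ ≤ X i o * v i) ∧ (∀ r, τ ≤ Y r o * u r)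

/-- Weak duality for the PT model. -/
theorem pt_weak_duality
    {I R J : Type*} [Fintype I] [Fintype R] [Fintype J]
    [Nonempty I] [Nonempty R] [Nonempty J]
    (X : I → J → ℝ) (Y : R → J → ℝ)
    (hX : ∀ i j, 0 < X i j) (hY : ∀ r j, 0 < Y r j)
    (o : J) (τ : ℝ) (hτ : 0 < τ)
    (π : J → ℝ) (Q : I → ℝ) (P : R → ℝ)
    (hdual : PTDualFeasible X Y o π Q P)
    (v : I → ℝ) (u : R → ℝ)
    (hprimal : PTPrimalFeasible X Y o τ v u) :
    τ * ((∑ i, Q i) + ∑ r, P r) ≤ (∑ i, v i * X i o) - ∑ r, u r * Y r o := by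

  obtain ⟨hπ, hQ, hP, hXc, hYc⟩ := hdual
  obtain ⟨hp1, hp2, hp3⟩ := hprimal
  have hvi : ∀ i, v i * X i o = (∑ j, π j * (v i * X i j)) + Q i * (X i o * v i) := by
    intro i
    have h := hXc i
    have h1 : ∑ j, π j * (v i * X i j) = v i * ∑ j, X i j * π j := by
      rw [Finset.mul_sum]; congr 1; ext j; ring
    rw [h1]; linear_combination (-(v i)) * h
  have hur : ∀ r, u r * Y r o = (∑ j, π j * (u r * Y r j)) - P r * (Y r o * u r) := by
    intro r
    have h := hYc r
    have h1 : ∑ j, π j * (u r * Y r j) = u r * ∑ j, Y r j * π j := by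
      rw [Finset.mul_sum]; congr 1; ext j; ring
    rw [h1]; linear_combination u r * h
  have hsum : (∑ i, v i * X i o) - ∑ r, u r * Y r o
      = (∑ j, π j * ((∑ i, v i * X i j) - ∑ r, u r * Y r j))
        + (∑ i, Q i * (X i o * v i)) + ∑ r, P r * (Y r o * u r) := by
    have e1 : (∑ i, v i * X i o)
        = (∑ j, π j * ∑ i, v i * X i j) + ∑ i, Q i * (X i o * v i) := by
      rw [Finset.sum_congr rfl fun i _ => hvi i, Finset.sum_add_distrib]
      congr 1
      rw [Finset.sum_comm]
      congr 1; ext j; rw [Finset.mul_sum]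
    have e2 : (∑ r, u r * Y r o)
        = (∑ j, π j * ∑ r, u r * Y r j) - ∑ r, P r * (Y r o * u r) := by
      rw [Finset.sum_congr rfl fun r _ => hur r, Finset.sum_sub_distrib]
      congr 1
      rw [Finset.sum_comm]
      congr 1; ext j; rw [Finset.mul_sum]
    rw [e1, e2]
    rw [show (∑ j, π j * ((∑ i, v i * X i j) - ∑ r, u r * Y r j))
        = (∑ j, π j * ∑ i, v i * X i j) - ∑ j, π j * ∑ r, u r * Y r j by
      rw [← Finset.sum_sub_distrib]; congr 1; ext j; ring]
    ring
  rw [hsum]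
  have h0 : 0 ≤ ∑ j, π j * ((∑ i, v i * X i j) - ∑ r, u r * Y r j) :=
    Finset.sum_nonneg fun j _ => mul_nonneg (hπ j) (hp1 j)
  have hQb : τ * ∑ i, Q i ≤ ∑ i, Q i * (X i o * v i) := by
    rw [Finset.mul_sum]
    exact Finset.sum_le_sum fun i _ => by
      have := hp2 i
      nlinarith [hQ i]
  have hPb : τ * ∑ r, P r ≤ ∑ r, P r * (Y r o * u r) := by
    rw [Finset.mul_sum]
    exact Finset.sum_le_sum fun r _ => by
      have := hp3 r
      nlinarith [hP r]
  nlinarith
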